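/- Let F̄ = 1 - F be regularly varying at infinity with index -1/γ₁, γ₁ > 0, where F is a continuous distribution function on (0,∞). Then for each natural number k, ∫_t^∞ (log(x/t))^k dF(x) ∼ γ₁^k · k! · F̄(t) as t → ∞. In particular, for k = 1, the conditional mean E[log(X/t) | X > t] converges to γ₁. -/

import Mathlib

open MeasureTheory Filter Set


lemma aux_layercake (μ : Measure ℝ) [IsProbabilityMeasure μ] (F : ℝ → ℝ)
    (hFcont : Continuous F)
    (htail : ∀ y, μ (Ioi y) = ENNReal.ofReal (1 - F y))
    (hFle : ∀ x, F x < 1)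
    (k : ℕ) (hk : k ≠ 0) (t : ℝ) (ht : 0 < t) :
    ∫ x in Ioi t, (Real.log (x / t)) ^ k ∂μ
      = ∫ u in Ioi 0, ((k : ℝ) * u ^ ((k : ℝ) - 1)) * (1 - F (t * Real.exp u)) := by
  have hkR : (0:ℝ) < (k:ℝ) := by exact_mod_cast Nat.pos_of_ne_zero hk
  set f : ℝ → ℝ := fun x => (Real.log (x / t)) ^ k with hf
  have f_mble : Measurable f :=
    (Real.measurable_log.comp (measurable_id.div_const t)).pow_const k
  have f_nn : 0 ≤ᵐ[μ.restrict (Ioi t)] f := by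
    refine (ae_restrict_iff' measurableSet_Ioi).2 (Eventually.of_forall fun x hx => ?_)
    exact pow_nonneg (Real.log_nonneg ((one_le_div ht).2 (le_of_lt hx))) k
  have gcont : Continuous fun s : ℝ => 1 - F (t * Real.exp (s ^ (k:ℝ)⁻¹)) :=
    continuous_const.sub (hFcont.comp
      ((continuous_const.mul (Real.continuous_exp.comp (Real.continuous_rpow_const (by positivity))))))
  -- layer cake
  have step1 : ∫ x in Ioi t, f x ∂μ
      = (∫⁻ s in Ioi 0, μ.restrict (Ioi t) {a | s < f a}).toReal := by
    rw [integral_eq_lintegral_of_nonneg_ae f_nn f_mble.aestronglyMeasurable,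
      lintegral_eq_lintegral_meas_lt _ f_nn f_mble.aemeasurable]
  -- identify superlevel sets
  have step2 : ∀ s ∈ Ioi (0:ℝ),
      μ.restrict (Ioi t) {a | s < f a}
        = ENNReal.ofReal (1 - F (t * Real.exp (s ^ (k:ℝ)⁻¹))) := by
    intro s hs
    rw [Measure.restrict_apply (measurableSet_lt measurable_const f_mble)]
    rw [← htail]
    congr 1
    ext x
    simp only [mem_inter_iff, mem_setOf_eq, mem_Ioi, hf]
    constructor
    · rintro ⟨hsf, htx⟩
      have hxt : (1:ℝ) < x / t := (one_lt_div ht).2 htx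
      have hlog : 0 ≤ Real.log (x / t) := Real.log_nonneg hxt.le
      have h1 : s ^ ((k:ℝ)⁻¹) < Real.log (x / t) := by
        have := Real.rpow_lt_rpow (le_of_lt hs) hsf (by positivity : (0:ℝ) < (k:ℝ)⁻¹)
        rwa [Real.pow_rpow_inv_natCast hlog hk] at this
      have h2 := (Real.lt_log_iff_exp_lt (by positivity : (0:ℝ) < x / t)).1 h1
      calc t * Real.exp (s ^ (k:ℝ)⁻¹) < t * (x / t) := mul_lt_mul_of_pos_left h2 ht
        _ = x := by field_simp
    · intro hx
      have hexp : (1:ℝ) < Real.exp (s ^ (k:ℝ)⁻¹) :=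
        Real.one_lt_exp_iff.2 (Real.rpow_pos_of_pos hs _)
      have htx : t < x := lt_of_le_of_lt (le_mul_of_one_le_right ht.le hexp.le) hx
      refine ⟨?_, htx⟩
      have h2 : Real.exp (s ^ (k:ℝ)⁻¹) < x / t := (lt_div_iff₀ ht).2 (by rw [mul_comm]; exact hx)
      have h3 : s ^ ((k:ℝ)⁻¹) < Real.log (x / t) :=
        (Real.lt_log_iff_exp_lt (div_pos (ht.trans htx) ht)).2 h2
      have h4 : (s ^ ((k:ℝ)⁻¹)) ^ k < (Real.log (x / t)) ^ k :=
        pow_lt_pow_left₀ h3 (Real.rpow_nonneg hs.le _) hk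
      rwa [Real.rpow_inv_natCast_pow hs.le hk] at h4
  have step3 : (∫⁻ s in Ioi 0, μ.restrict (Ioi t) {a | s < f a}).toReal
      = ∫ s in Ioi 0, (1 - F (t * Real.exp (s ^ (k:ℝ)⁻¹))) := by
    rw [setLIntegral_congr_fun measurableSet_Ioi step2,
      integral_eq_lintegral_of_nonneg_ae
        (Eventually.of_forall fun s => by
          have := hFle (t * Real.exp (s ^ (k:ℝ)⁻¹)); simp only [Pi.zero_apply]; linarith)
        gcont.measurable.aestronglyMeasurable]
  -- change of variables s = u ^ k
  have step4 : ∫ s in Ioi 0, (1 - F (t * Real.exp (s ^ (k:ℝ)⁻¹)))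
      = ∫ u in Ioi 0, ((k : ℝ) * u ^ ((k : ℝ) - 1)) * (1 - F (t * Real.exp u)) := by
    rw [← integral_comp_rpow_Ioi_of_pos (g := fun s => 1 - F (t * Real.exp (s ^ (k:ℝ)⁻¹))) hkR]
    refine setIntegral_congr_fun measurableSet_Ioi fun u hu => ?_
    have : ((u ^ (k:ℝ)) ^ ((k:ℝ)⁻¹)) = u := by
      rw [← Real.rpow_mul (le_of_lt hu), mul_inv_cancel₀ hkR.ne', Real.rpow_one]
    rw [this, smul_eq_mul]
  rw [step1, step3, step4]

lemma aux_gamma (k : ℕ) (hk : k ≠ 0) (γ₁ : ℝ) (hγ₁ : 0 < γ₁) :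
    ∫ u in Ioi (0:ℝ), ((k : ℝ) * u ^ ((k : ℝ) - 1)) * Real.exp (-(γ₁⁻¹ * u))
      = γ₁ ^ k * (Nat.factorial k : ℝ) := by
  obtain ⟨m, rfl⟩ := Nat.exists_eq_succ_of_ne_zero hk
  have h1 : ∫ u in Ioi (0:ℝ), ((m+1 : ℕ) : ℝ) * u ^ (((m+1:ℕ) : ℝ) - 1) * Real.exp (-(γ₁⁻¹ * u))
      = ((m+1 : ℕ) : ℝ) * ∫ u in Ioi (0:ℝ), u ^ (((m+1:ℕ) : ℝ) - 1) * Real.exp (-(γ₁⁻¹ * u)) := by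
    rw [← integral_const_mul]
    congr 1; ext u; ring
  rw [h1, Real.integral_rpow_mul_exp_neg_mul_Ioi (by positivity) (by positivity)]
  rw [one_div, inv_inv]
  have h2 : ((m+1:ℕ):ℝ) = (m:ℝ) + 1 := by push_cast; ring
  rw [h2, Real.Gamma_nat_eq_factorial m, ← Real.rpow_natCast γ₁ (m+1)]
  have h3 : ((m+1:ℕ):ℝ) = (m:ℝ) + 1 := h2
  rw [show ((m:ℝ)+1) = (((m+1:ℕ)):ℝ) by push_cast; ring]
  rw [Nat.factorial_succ]
  push_cast
  ring

section
variable (μ : Measure ℝ) [IsProbabilityMeasure μ] (F : ℝ → ℝ)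

lemma aux_main (hFcont : Continuous F)
    (htail : ∀ y, μ (Ioi y) = ENNReal.ofReal (1 - F y))
    (hFbar : ∀ y, 0 < 1 - F y)
    (hFmono : Monotone F)
    (γ₁ : ℝ) (hγ₁ : 0 < γ₁)
    (hFrv : ∀ x > (0 : ℝ), Tendsto (fun t => (1 - F (t * x)) / (1 - F t))
      atTop (nhds (x ^ (-1 / γ₁))))
    (k : ℕ) (hk : k ≠ 0) :
    Tendsto (fun t =>
        (∫ x in Ioi t, (Real.log (x / t)) ^ k ∂μ) /
          (γ₁ ^ k * (Nat.factorial k : ℝ) * (1 - F t)))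
      atTop (nhds 1) := by
  have hkR : (0:ℝ) < (k:ℝ) := by exact_mod_cast Nat.pos_of_ne_zero hk
  have hk1 : (1:ℝ) ≤ (k:ℝ) := by exact_mod_cast Nat.one_le_iff_ne_zero.2 hk
  set c : ℝ := (1 + Real.exp (-1))/2 with hc
  have he1 : Real.exp (-1) < 1 := by
    rw [Real.exp_lt_one_iff]; norm_num
  have hc0 : 0 < c := by positivity
  have hc1 : c < 1 := by rw [hc]; linarith
  have hce : Real.exp (-1) < c := by rw [hc]; linarith
  have hlogc : Real.log c < 0 := Real.log_neg hc0 hc1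
  set b : ℝ := (-Real.log c) / γ₁ with hbdef
  have hb : 0 < b := div_pos (by linarith) hγ₁
  -- one-step eventual bound
  have hlim1 : (Real.exp γ₁) ^ (-1/γ₁) = Real.exp (-1) := by
    rw [Real.rpow_def_of_pos (Real.exp_pos _), Real.log_exp]
    congr 1; field_simp
  have hev : ∀ᶠ t in atTop, (1 - F (t * Real.exp γ₁)) / (1 - F t) < c := by
    have := hFrv (Real.exp γ₁) (Real.exp_pos _)
    rw [hlim1] at this
    exact this.eventually_lt_const hce
  obtain ⟨T₀, hT₀⟩ := eventually_atTop.1 hev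
  set T : ℝ := max T₀ 1 with hTdef
  have hT1 : (1:ℝ) ≤ T := le_max_right _ _
  have hstep : ∀ t, T ≤ t → 1 - F (t * Real.exp γ₁) ≤ c * (1 - F t) := by
    intro t htT
    have h := hT₀ t (le_trans (le_max_left _ _) htT)
    have := (div_lt_iff₀ (hFbar t)).1 h
    linarith
  have hchain : ∀ t, T ≤ t → ∀ n : ℕ, 1 - F (t * Real.exp (n * γ₁)) ≤ c ^ n * (1 - F t) := by
    intro t htT n
    induction n with
    | zero => simp
    | succ n ih =>
      have htpos : 0 < t := lt_of_lt_of_le (by linarith : (0:ℝ) < T) htT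
      have ht' : T ≤ t * Real.exp (n * γ₁) :=
        le_trans htT (le_mul_of_one_le_right htpos.le (Real.one_le_exp (by positivity)))
      have h1 := hstep _ ht'
      have h2 : ((n+1:ℕ):ℝ) * γ₁ = (n:ℝ) * γ₁ + γ₁ := by push_cast; ring
      rw [h2, Real.exp_add, ← mul_assoc]
      calc 1 - F (t * Real.exp ((n:ℝ) * γ₁) * Real.exp γ₁) ≤ c * (1 - F (t * Real.exp ((n:ℝ)*γ₁))) := h1
        _ ≤ c * (c ^ n * (1 - F t)) := mul_le_mul_of_nonneg_left ih hc0.le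
        _ = c ^ (n+1) * (1 - F t) := by ring
  have hub : ∀ t, T ≤ t → ∀ u : ℝ, 0 ≤ u →
      1 - F (t * Real.exp u) ≤ (c⁻¹ * Real.exp (-(b * u))) * (1 - F t) := by
    intro t htT u hu
    have htpos : 0 < t := lt_of_lt_of_le (by linarith : (0:ℝ) < T) htT
    set n : ℕ := ⌊u / γ₁⌋₊ with hn
    have hdiv : 0 ≤ u / γ₁ := by positivity
    have h1 : (n:ℝ) * γ₁ ≤ u := by
      have := Nat.floor_le hdiv
      calc (n:ℝ) * γ₁ ≤ (u / γ₁) * γ₁ := mul_le_mul_of_nonneg_right this hγ₁.le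
        _ = u := by field_simp
    have h2 : u / γ₁ < (n:ℝ) + 1 := Nat.lt_floor_add_one _
    have hmono : 1 - F (t * Real.exp u) ≤ 1 - F (t * Real.exp ((n:ℝ) * γ₁)) := by
      have := hFmono (mul_le_mul_of_nonneg_left (Real.exp_le_exp.2 h1) htpos.le)
      linarith
    have h3 : (c:ℝ) ^ n ≤ c⁻¹ * Real.exp (-(b * u)) := by
      have hcn : (c:ℝ) ^ n = Real.exp ((n:ℝ) * Real.log c) := by
        rw [Real.exp_nat_mul, Real.exp_log hc0]
      have h4 : (n:ℝ) * Real.log c ≤ (u / γ₁ - 1) * Real.log c := by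
        have : u / γ₁ - 1 ≤ (n:ℝ) := by linarith
        exact mul_le_mul_of_nonpos_right this hlogc.le
      have h5 : (u / γ₁ - 1) * Real.log c = -Real.log c + -(b * u) := by
        rw [hbdef]; field_simp; ring
      rw [hcn]
      calc Real.exp ((n:ℝ) * Real.log c) ≤ Real.exp ((u / γ₁ - 1) * Real.log c) :=
            Real.exp_le_exp.2 h4
        _ = c⁻¹ * Real.exp (-(b * u)) := by
            rw [h5, Real.exp_add, ← Real.exp_log hc0, ← Real.exp_neg]
            simp [Real.exp_log hc0]
    calc 1 - F (t * Real.exp u) ≤ 1 - F (t * Real.exp ((n:ℝ) * γ₁)) := hmono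
      _ ≤ c ^ n * (1 - F t) := hchain t htT n
      _ ≤ (c⁻¹ * Real.exp (-(b * u))) * (1 - F t) :=
          mul_le_mul_of_nonneg_right h3 (hFbar t).le
  -- dominated convergence
  have hDCT : Tendsto (fun t : ℝ => ∫ u in Ioi (0:ℝ),
      ((k:ℝ) * u ^ ((k:ℝ) - 1)) * ((1 - F (t * Real.exp u)) / (1 - F t)))
      atTop (nhds (γ₁ ^ k * (Nat.factorial k : ℝ))) := by
    have hGamma := aux_gamma k hk γ₁ hγ₁
    rw [← hGamma]
    refine tendsto_integral_filter_of_dominated_convergence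
      (fun u => ((k:ℝ) * c⁻¹) * (u ^ ((k:ℝ) - 1) * Real.exp (-b * u ^ (1:ℝ)))) ?_ ?_ ?_ ?_
    · refine Eventually.of_forall fun t => ?_
      refine Continuous.aestronglyMeasurable ?_
      exact ((continuous_const.mul (Real.continuous_rpow_const (by linarith))).mul
        ((continuous_const.sub (hFcont.comp (continuous_const.mul Real.continuous_exp))).div_const _))
    · filter_upwards [eventually_ge_atTop T] with t htT
      refine (ae_restrict_iff' measurableSet_Ioi).2 (Eventually.of_forall fun u hu => ?_)
      have hu0 : (0:ℝ) < u := hu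
      have hw : 0 ≤ (k:ℝ) * u ^ ((k:ℝ) - 1) := by positivity
      have hq0 : 0 ≤ (1 - F (t * Real.exp u)) / (1 - F t) :=
        div_nonneg (by linarith [hFbar (t * Real.exp u)]) (hFbar t).le
      rw [Real.norm_eq_abs, abs_of_nonneg (mul_nonneg hw hq0), Real.rpow_one, neg_mul]
      have hq : (1 - F (t * Real.exp u)) / (1 - F t) ≤ c⁻¹ * Real.exp (-(b * u)) :=
        (div_le_iff₀ (hFbar t)).2 (hub t htT u hu0.le)
      calc ((k:ℝ) * u ^ ((k:ℝ) - 1)) * ((1 - F (t * Real.exp u)) / (1 - F t))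
          ≤ ((k:ℝ) * u ^ ((k:ℝ) - 1)) * (c⁻¹ * Real.exp (-(b * u))) :=
            mul_le_mul_of_nonneg_left hq hw
        _ = ((k:ℝ) * c⁻¹) * (u ^ ((k:ℝ) - 1) * Real.exp (-(b * u))) := by ring
    · exact (integrableOn_rpow_mul_exp_neg_mul_rpow (by linarith) one_pos hb).const_mul _
    · refine (ae_restrict_iff' measurableSet_Ioi).2 (Eventually.of_forall fun u hu => ?_)
      have hu0 : (0:ℝ) < u := hu
      have h := hFrv (Real.exp u) (Real.exp_pos u)
      have hval : (Real.exp u) ^ (-1/γ₁) = Real.exp (-(γ₁⁻¹ * u)) := by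
        rw [Real.rpow_def_of_pos (Real.exp_pos _), Real.log_exp]
        congr 1; field_simp
      rw [hval] at h
      exact h.const_mul _
  -- assemble
  have hC : (γ₁ ^ k * (Nat.factorial k : ℝ)) ≠ 0 := by positivity
  have heq : ∀ᶠ t in atTop, (∫ u in Ioi (0:ℝ),
      ((k:ℝ) * u ^ ((k:ℝ) - 1)) * ((1 - F (t * Real.exp u)) / (1 - F t)))
        / (γ₁ ^ k * (Nat.factorial k : ℝ))
      = (∫ x in Ioi t, (Real.log (x / t)) ^ k ∂μ) /
          (γ₁ ^ k * (Nat.factorial k : ℝ) * (1 - F t)) := by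
    filter_upwards [eventually_ge_atTop T] with t htT
    have htpos : 0 < t := lt_of_lt_of_le (by linarith : (0:ℝ) < T) htT
    rw [aux_layercake μ F hFcont htail (fun y => by linarith [hFbar y]) k hk t htpos]
    have h1 : ∫ u in Ioi (0:ℝ),
        ((k:ℝ) * u ^ ((k:ℝ) - 1)) * ((1 - F (t * Real.exp u)) / (1 - F t))
        = (∫ u in Ioi (0:ℝ), ((k:ℝ) * u ^ ((k:ℝ) - 1)) * (1 - F (t * Real.exp u))) / (1 - F t) := by
      rw [← integral_div]
      congr 1; ext u; ring
    rw [h1, div_div, mul_comm (1 - F t) (γ₁ ^ k * (Nat.factorial k : ℝ))]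
  have := (hDCT.div_const (γ₁ ^ k * (Nat.factorial k : ℝ))).congr' heq
  rwa [div_self hC] at this

end

theorem tail_integral_log_pow
    (μ : Measure ℝ) [IsProbabilityMeasure μ]
    (F : ℝ → ℝ) (hF : F = fun t => (μ (Iic t)).toReal)
    (hFcont : Continuous F) (hμpos : μ (Iic 0) = 0)
    (hFbar_pos : ∀ x, F x < 1)
    (γ₁ : ℝ) (hγ₁ : 0 < γ₁)
    (hFrv : ∀ x > (0 : ℝ), Tendsto (fun t => (1 - F (t * x)) / (1 - F t))
      atTop (nhds (x ^ (-1 / γ₁)))) :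
    (∀ k : ℕ, Tendsto (fun t =>
        (∫ x in Ioi t, (Real.log (x / t)) ^ k ∂μ) /
          (γ₁ ^ k * (Nat.factorial k : ℝ) * (1 - F t)))
      atTop (nhds 1)) ∧
    Tendsto (fun t => (∫ x in Ioi t, Real.log (x / t) ∂μ) / (1 - F t))
      atTop (nhds γ₁) := by
  have hFbar : ∀ y, 0 < 1 - F y := fun y => by linarith [hFbar_pos y]
  have htail : ∀ y, μ (Ioi y) = ENNReal.ofReal (1 - F y) := by
    intro y
    have h1 : μ (Ioi y) = 1 - μ (Iic y) := by
      rw [← compl_Iic, measure_compl measurableSet_Iic (measure_ne_top μ _), measure_univ]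
    rw [h1, hF]
    rw [ENNReal.ofReal_sub _ ENNReal.toReal_nonneg, ENNReal.ofReal_one,
      ENNReal.ofReal_toReal (measure_ne_top μ _)]
  have hFmono : Monotone F := by
    intro a b hab
    rw [hF]
    exact ENNReal.toReal_le_toReal (measure_ne_top μ _) (measure_ne_top μ _) |>.2
      (measure_mono (Iic_subset_Iic.2 hab))
  have key : ∀ k : ℕ, k ≠ 0 → Tendsto (fun t =>
      (∫ x in Ioi t, (Real.log (x / t)) ^ k ∂μ) /
        (γ₁ ^ k * (Nat.factorial k : ℝ) * (1 - F t))) atTop (nhds 1) :=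
    fun k hk => aux_main μ F hFcont htail hFbar hFmono γ₁ hγ₁ hFrv k hk
  have hzero : Tendsto (fun t =>
      (∫ x in Ioi t, (Real.log (x / t)) ^ 0 ∂μ) /
        (γ₁ ^ 0 * (Nat.factorial 0 : ℝ) * (1 - F t))) atTop (nhds 1) := by
    have : ∀ t : ℝ, (∫ x in Ioi t, (Real.log (x / t)) ^ 0 ∂μ) /
        (γ₁ ^ 0 * (Nat.factorial 0 : ℝ) * (1 - F t)) = 1 := by
      intro t
      have h1 : (∫ x in Ioi t, (Real.log (x / t)) ^ 0 ∂μ) = (μ (Ioi t)).toReal := by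
        simp; rfl
      rw [h1, htail t, ENNReal.toReal_ofReal (hFbar t).le]
      simp only [pow_zero, Nat.factorial_zero, Nat.cast_one, one_mul]
      exact div_self (hFbar t).ne'
    simp only [this]
    exact tendsto_const_nhds
  have part1 : ∀ k : ℕ, Tendsto (fun t =>
      (∫ x in Ioi t, (Real.log (x / t)) ^ k ∂μ) /
        (γ₁ ^ k * (Nat.factorial k : ℝ) * (1 - F t))) atTop (nhds 1) := by
    intro k
    rcases Nat.eq_zero_or_pos k with rfl | hk
    · exact hzero
    · exact key k hk.ne'
  refine ⟨part1, ?_⟩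
  have h1 := part1 1
  simp only [pow_one, Nat.factorial_one, Nat.cast_one, mul_one] at h1
  have h2 := h1.const_mul γ₁
  rw [mul_one] at h2
  refine h2.congr fun t => ?_
  rw [mul_comm γ₁, div_mul_eq_mul_div, div_eq_div_iff]
  · ring
  · exact (mul_ne_zero hγ₁.ne' (hFbar t).ne')
  · exact (hFbar t).ne'
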